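/- Let (A, \mu, \alpha) be a multiplicative Hom-associative algebra. On A^{\otimes n+1} define the cyclic operator t_n(a_0 \otimes ... \otimes a_n) = (-1)^n a_n \otimes a_0 \otimes ... \otimes a_{n-1}, the Hochschild boundary b(a_0 \otimes ... \otimes a_n) = \sum_{i=0}^{n-1} (-1)^i \alpha(a_0) \otimes ... \otimes a_i a_{i+1} \otimes ... \otimes \alpha(a_n) + (-1)^n a_n a_0 \otimes \alpha(a_1) \otimes ... \otimes \alpha(a_{n-1}), and b' the same sum without the last term. Then (Id - t_{n-1}) b' = b (Id - t_n). -/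

import Mathlib

/-- The space of Hochschild chains of degree `n` of `A` (the free vector space on the
elementary tensors of `A^{⊗(n+1)}`). -/
abbrev HChain (k A : Type*) [Semiring k] (n : ℕ) := (Fin (n + 1) → A) →₀ k

/-- The cyclic permutation `(a_0, …, a_n) ↦ (a_n, a_0, …, a_{n-1})`. -/
def cycTuple {A : Type*} (n : ℕ) (a : Fin (n + 1) → A) : Fin (n + 1) → A :=
  fun j => a (j - 1)

/-- The `i`-th Hochschild face `A^{⊗(n+2)} → A^{⊗(n+1)}` on elementary tensors, twisted
by `γ` and with product `m`: for `i ≤ n` it multiplies the `i`-th and `(i+1)`-st entries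
and applies `γ` to the rest; the last face multiplies the last entry into the first. -/
def cFace {A : Type*} (γ : A → A) (m : A → A → A) (n : ℕ) (i : Fin (n + 2))
    (a : Fin (n + 2) → A) : Fin (n + 1) → A :=
  if (i : ℕ) = n + 1 then
    fun j => if (j : ℕ) = 0 then m (a (Fin.last (n + 1))) (a 0) else γ (a j.castSucc)
  else fun j =>
    if (j : ℕ) < (i : ℕ) then γ (a j.castSucc)
    else if (j : ℕ) = (i : ℕ) then m (a j.castSucc) (a j.succ)
    else γ (a j.succ)

set_option linter.unnecessarySeqFocus false in
lemma cyc0 {A : Type*} (γ : A → A) (m : A → A → A) (n : ℕ) (a : Fin (n+2) → A) :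
    cFace γ m n 0 (cycTuple (n+1) a) = cFace γ m n (Fin.last (n+1)) a := by
  funext j
  have E2 : ∀ x : Fin (n+2), ((x - 1 : Fin (n+2)) : ℕ) = if (x:ℕ) = 0 then n+1 else (x:ℕ) - 1 := by
    intro x; rw [Fin.coe_sub_one]; simp only [Fin.ext_iff, Fin.val_zero]
  unfold cFace cycTuple
  rw [if_neg (show ¬(((0 : Fin (n+2)) : ℕ) = n + 1) by simp),
      if_pos (show ((Fin.last (n+1) : Fin (n+2)) : ℕ) = n + 1 from rfl)]
  simp only [Fin.val_zero, Fin.coe_castSucc, Fin.val_succ, Fin.val_last, Nat.not_lt_zero,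
    if_false]
  split_ifs with h1 <;> simp only [h1, if_true, if_false, not_false_eq_true] <;>
  first
    | (exfalso; first | contradiction | omega)
    | (refine congrArg γ (congrArg a (Fin.ext ?_));
       simp only [E2, Fin.coe_castSucc, Fin.val_succ, Fin.val_last, Fin.val_zero];
       split_ifs <;> first | contradiction | omega)
    | (refine congrArg₂ m ?_ ?_ <;>
       · refine congrArg a (Fin.ext ?_)
         simp only [E2, Fin.coe_castSucc, Fin.val_succ, Fin.val_last, Fin.val_zero]
         split_ifs <;> first | contradiction | omega)

set_option linter.unnecessarySeqFocus false in
lemma cycsucc {A : Type*} (γ : A → A) (m : A → A → A) (n : ℕ) (i : Fin (n+1))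
    (a : Fin (n+2) → A) :
    cFace γ m n i.succ (cycTuple (n+1) a) = cycTuple n (cFace γ m n i.castSucc a) := by
  funext j
  have E1 : ∀ x : Fin (n+1), ((x - 1 : Fin (n+1)) : ℕ) = if (x:ℕ) = 0 then n else (x:ℕ) - 1 := by
    intro x; rw [Fin.coe_sub_one]; simp only [Fin.ext_iff, Fin.val_zero]
  have E2 : ∀ x : Fin (n+2), ((x - 1 : Fin (n+2)) : ℕ) = if (x:ℕ) = 0 then n+1 else (x:ℕ) - 1 := by
    intro x; rw [Fin.coe_sub_one]; simp only [Fin.ext_iff, Fin.val_zero]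
  have hj : (j : ℕ) ≤ n := Fin.is_le j
  have hi : (i : ℕ) ≤ n := Fin.is_le i
  unfold cFace cycTuple
  by_cases hin : (i : ℕ) = n
  · rw [if_pos (show ((i.succ : Fin (n+2)) : ℕ) = n + 1 by simp [hin]),
        if_neg (show ¬(((i.castSucc : Fin (n+2)) : ℕ) = n + 1) by simp; omega)]
    simp only [Fin.coe_castSucc, Fin.val_succ, Fin.val_last, Fin.val_zero, E1]
    split_ifs <;>
    first
      | (exfalso; first | contradiction | omega)
      | (refine congrArg γ (congrArg a (Fin.ext ?_));
         simp only [E1, E2, Fin.coe_castSucc, Fin.val_succ, Fin.val_last, Fin.val_zero];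
         split_ifs <;> first | contradiction | omega)
      | (refine congrArg₂ m ?_ ?_ <;>
         · refine congrArg a (Fin.ext ?_)
           simp only [E1, E2, Fin.coe_castSucc, Fin.val_succ, Fin.val_last, Fin.val_zero]
           split_ifs <;> first | contradiction | omega)
  · rw [if_neg (show ¬(((i.succ : Fin (n+2)) : ℕ) = n + 1) by simp; omega),
        if_neg (show ¬(((i.castSucc : Fin (n+2)) : ℕ) = n + 1) by simp; omega)]
    simp only [Fin.coe_castSucc, Fin.val_succ, Fin.val_last, Fin.val_zero, E1]
    split_ifs <;>
    first
      | (exfalso; first | contradiction | omega)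
      | (refine congrArg γ (congrArg a (Fin.ext ?_));
         simp only [E1, E2, Fin.coe_castSucc, Fin.val_succ, Fin.val_last, Fin.val_zero];
         split_ifs <;> first | contradiction | omega)
      | (refine congrArg₂ m ?_ ?_ <;>
         · refine congrArg a (Fin.ext ?_)
           simp only [E1, E2, Fin.coe_castSucc, Fin.val_succ, Fin.val_last, Fin.val_zero]
           split_ifs <;> first | contradiction | omega)

lemma lift_single_aux {k M X : Type*} [Field k] [AddCommGroup M] [Module k M]
    (f : X → M) (a : X) (c : k) :
    (Finsupp.lift M k X f) (Finsupp.single a c) = c • f a := by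
  simp [Finsupp.lift_apply, Finsupp.sum_single_index]

lemma key_aux {k M : Type*} [Field k] [AddCommGroup M] [Module k M] {n : ℕ}
    (u v : Fin (n+2) → M) (w : Fin (n+1) → M)
    (h0 : v 0 = u (Fin.last (n+1))) (hs : ∀ i : Fin (n+1), v i.succ = w i) :
    ∑ i : Fin (n+1), (((-1:k)^(i:ℕ)) • u i.castSucc - ((-1:k)^(i:ℕ)) • ((-1:k)^n) • w i)
    = (∑ i : Fin (n+2), ((-1:k)^(i:ℕ)) • u i)
      - ((-1:k)^(n+1)) • ∑ i : Fin (n+2), ((-1:k)^(i:ℕ)) • v i := by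
  rw [Fin.sum_univ_castSucc (f := fun i : Fin (n+2) => ((-1:k)^(i:ℕ)) • u i),
      Fin.sum_univ_succ (f := fun i : Fin (n+2) => ((-1:k)^(i:ℕ)) • v i),
      Finset.sum_sub_distrib]
  simp only [h0, hs, Fin.val_succ, Fin.coe_castSucc, Fin.val_last, Fin.val_zero, pow_zero,
    one_smul, smul_add, Finset.smul_sum, smul_smul]
  have : ∀ i : Fin (n+1), ((-1:k)^(n+1)) * ((-1:k)^((i:ℕ)+1)) = ((-1:k)^(i:ℕ)) * ((-1:k)^n) := by
    intro i; ring
  simp only [this]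
  abel

/-- For a multiplicative Hom-associative algebra `A`, with `t` the signed cyclic
operator, `b` the Hom-Hochschild boundary and `b'` its truncation,
`(Id - t_{n-1}) b' = b (Id - t_n)`. -/
theorem stmt_14 {k A : Type*} [Field k] [NonUnitalNonAssocRing A] [Module k A]
    [SMulCommClass k A A] [IsScalarTower k A A]
    (α : A →ₗ[k] A)
    (hassoc : ∀ a b c : A, α a * (b * c) = (a * b) * α c)
    (hmul : ∀ a b : A, α (a * b) = α a * α b)
    (n : ℕ)
    (T : (m : ℕ) → HChain k A m →ₗ[k] HChain k A m)
    (hT : ∀ m : ℕ, T m = (Finsupp.lift (HChain k A m) k (Fin (m + 1) → A))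
      (fun a => ((-1 : k) ^ m) • Finsupp.single (cycTuple m a) (1 : k)))
    (b : HChain k A (n + 1) →ₗ[k] HChain k A n)
    (hb : b = (Finsupp.lift (HChain k A n) k (Fin (n + 2) → A))
      (fun a => ∑ i : Fin (n + 2), ((-1 : k) ^ (i : ℕ)) •
        Finsupp.single (cFace (⇑α) (· * ·) n i a) (1 : k)))
    (b' : HChain k A (n + 1) →ₗ[k] HChain k A n)
    (hb' : b' = (Finsupp.lift (HChain k A n) k (Fin (n + 2) → A))
      (fun a => ∑ i : Fin (n + 1), ((-1 : k) ^ (i : ℕ)) •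
        Finsupp.single (cFace (⇑α) (· * ·) n i.castSucc a) (1 : k))) :
    (LinearMap.id - T n) ∘ₗ b' = b ∘ₗ (LinearMap.id - T (n + 1)) := by
  subst hb hb'
  apply Finsupp.lhom_ext
  intro x c
  simp only [LinearMap.comp_apply, LinearMap.sub_apply, LinearMap.id_apply, map_sub,
    lift_single_aux, hT, map_smul, map_sum, smul_sub, one_smul]
  rw [← smul_sub]
  congr 1
  exact key_aux
    (fun i => Finsupp.single (cFace (⇑α) (· * ·) n i x) (1 : k))
    (fun i => Finsupp.single (cFace (⇑α) (· * ·) n i (cycTuple (n+1) x)) (1 : k))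
    (fun i => Finsupp.single (cycTuple n (cFace (⇑α) (· * ·) n i.castSucc x)) (1 : k))
    (by simp only [cyc0]) (fun i => by simp only [cycsucc])
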